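/- Fix h > 0 and j ∈ ℤ with j ≠ 0, and regard the linear-interpolation weight w_j^T as a function of α ∈ (0,2). Then as α → 2⁻, w_j^T converges to h^{−2} if |j| = 1, and w_j^T converges to 0 if |j| ≥ 2. Consequently, in the limit α → 2⁻ the discrete operator Σ_{j≠0}(u_i − u_{i−j})w_j^T becomes the standard three-point centered difference −(u_{i+1} − 2u_i + u_{i−1})/h². -/

import Mathlib

open Real

/-- The normalizing constant `C_{1,α}` of the one-dimensional fractional Laplacian. -/
noncomputable def Cna (α : ℝ) : ℝ :=
  α * 2 ^ (α - 1) * Real.Gamma ((α + 1) / 2) / (Real.sqrt Real.pi * Real.Gamma ((2 - α) / 2))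

/-- The antiderivative `F` with `F''(t) = C_{1,α} t^{−1−α}` for `t > 0`. -/
noncomputable def Ffun (α t : ℝ) : ℝ :=
  if α = 1 then -(Cna 1) * Real.log t else Cna α * t ^ (1 - α) / ((α - 1) * α)

/-- The derivative `F'` of `Ffun`: `F'(t) = −C_{1,α} t^{−α}/α` for `t > 0`
(valid in both cases `α ≠ 1` and `α = 1`). -/
noncomputable def Fd (α t : ℝ) : ℝ := -(Cna α) * t ^ (-α) / α

/-- The linear-interpolation weights `w_j^T` (with the irrelevant `w_0` set to `0`). -/
noncomputable def wT (α h : ℝ) (j : ℤ) : ℝ :=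
  if j = 0 then 0
  else if j.natAbs = 1 then
    h ^ (-α) * (Cna α / (2 - α) - Fd α 1 + Ffun α 2 - Ffun α 1)
  else
    h ^ (-α) * (Ffun α ((j.natAbs : ℝ) + 1) - 2 * Ffun α (j.natAbs : ℝ)
      + Ffun α ((j.natAbs : ℝ) - 1))

open Filter Topology

noncomputable def g2 (α : ℝ) : ℝ :=
  α * 2 ^ (α - 1) * Real.Gamma ((α + 1) / 2) / (Real.sqrt Real.pi * (2 * Real.Gamma ((4 - α) / 2)))

lemma sqrt_pi_pos : 0 < Real.sqrt Real.pi := Real.sqrt_pos.mpr Real.pi_pos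

lemma Cna_factor {α : ℝ} (hα : α < 2) : Cna α = (2 - α) * g2 α := by
  have hne : (2:ℝ) - α ≠ 0 := by intro hc; linarith
  have h2 : (0:ℝ) < (2 - α) / 2 := by linarith
  have hkey : Real.Gamma ((4 - α) / 2) = ((2 - α) / 2) * Real.Gamma ((2 - α) / 2) := by
    rw [show (4 - α) / 2 = (2 - α) / 2 + 1 by ring, Real.Gamma_add_one h2.ne']
  have hΓ : Real.Gamma ((2 - α) / 2) ≠ 0 := (Real.Gamma_pos_of_pos h2).ne'
  have hs := sqrt_pi_pos.ne'
  rw [Cna, g2, hkey]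
  rw [show Real.sqrt Real.pi * (2 * ((2 - α) / 2 * Real.Gamma ((2 - α) / 2)))
      = Real.sqrt Real.pi * ((2 - α) * Real.Gamma ((2 - α) / 2)) from by ring]
  field_simp

lemma contGamma (x : ℝ) (hx : 0 < x) : ContinuousAt Real.Gamma x :=
  (Real.differentiableAt_Gamma (fun m => by
    intro hc
    have : (0:ℝ) ≤ m := Nat.cast_nonneg m
    rw [hc] at hx; linarith)).continuousAt

lemma cont_rpow_base (b : ℝ) (hb : 0 < b) : Continuous (fun α : ℝ => b ^ α) := by
  have : (fun α : ℝ => b ^ α) = fun α => Real.exp (Real.log b * α) := by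
    funext α; rw [Real.rpow_def_of_pos hb]
  rw [this]
  exact Real.continuous_exp.comp (continuous_const.mul continuous_id)

lemma tendsto_g2_one : Tendsto g2 (nhdsWithin 2 (Set.Iio 2)) (nhds 1) := by
  have hΓ1 : ContinuousAt (fun α : ℝ => Real.Gamma ((α + 1) / 2)) 2 := by
    have hf : ContinuousAt (fun α : ℝ => (α + 1) / 2) 2 := by fun_prop
    exact ContinuousAt.comp (g := Real.Gamma) (contGamma _ (by norm_num)) hf
  have hΓ2 : ContinuousAt (fun α : ℝ => Real.Gamma ((4 - α) / 2)) 2 := by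
    have hf : ContinuousAt (fun α : ℝ => (4 - α) / 2) 2 := by fun_prop
    exact ContinuousAt.comp (g := Real.Gamma) (contGamma _ (by norm_num)) hf
  have hc : ContinuousAt g2 2 := by
    apply ContinuousAt.div
    · exact (continuousAt_id.mul
        (((cont_rpow_base 2 (by norm_num)).comp (continuous_id.sub continuous_const)).continuousAt)).mul hΓ1
    · exact continuousAt_const.mul (continuousAt_const.mul hΓ2)
    · show Real.sqrt Real.pi * (2 * Real.Gamma ((4 - (2:ℝ)) / 2)) ≠ 0
      rw [show ((4:ℝ) - 2) / 2 = 1 by norm_num, Real.Gamma_one]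
      positivity
  have hval : g2 2 = 1 := by
    rw [g2, show ((2:ℝ) + 1) / 2 = 1/2 + 1 by norm_num, show ((4:ℝ) - 2) / 2 = 1 by norm_num,
      Real.Gamma_one, Real.Gamma_add_one (by norm_num : (1:ℝ)/2 ≠ 0),
      Real.Gamma_one_half_eq, show (2:ℝ) - 1 = 1 by norm_num, Real.rpow_one]
    rw [div_eq_one_iff_eq (by positivity : Real.sqrt Real.pi * (2 * 1) ≠ 0)]
    ring
  have ht : Tendsto g2 (nhds 2) (nhds 1) := by rw [← hval]; exact hc.tendsto
  exact ht.mono_left nhdsWithin_le_nhds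

lemma tendsto_sub_two : Tendsto (fun α : ℝ => 2 - α) (nhdsWithin 2 (Set.Iio 2)) (nhds 0) := by
  have h : Tendsto (fun α : ℝ => 2 - α) (nhds 2) (nhds 0) := by
    have hc : Continuous (fun α : ℝ => 2 - α) := by fun_prop
    simpa using hc.tendsto (2:ℝ)
  exact h.mono_left nhdsWithin_le_nhds

lemma tendsto_Cna_zero : Tendsto Cna (nhdsWithin 2 (Set.Iio 2)) (nhds 0) := by
  have hev : ∀ᶠ α in nhdsWithin 2 (Set.Iio 2), (2 - α) * g2 α = Cna α := by
    filter_upwards [self_mem_nhdsWithin] with α hα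
    exact (Cna_factor hα).symm
  have h : Tendsto (fun α => (2 - α) * g2 α) (nhdsWithin 2 (Set.Iio 2)) (nhds 0) := by
    simpa using tendsto_sub_two.mul tendsto_g2_one
  exact h.congr' hev

lemma tendsto_ratio :
    Tendsto (fun α => Cna α / (2 - α)) (nhdsWithin 2 (Set.Iio 2)) (nhds 1) := by
  apply tendsto_g2_one.congr'
  filter_upwards [self_mem_nhdsWithin] with α hα
  have hlt : α < 2 := hα
  have hne : (2:ℝ) - α ≠ 0 := by intro hc; linarith
  rw [Cna_factor hlt, mul_comm, mul_div_assoc, div_self hne, mul_one]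

lemma tendsto_base (t : ℝ) (ht : 0 < t) (f : ℝ → ℝ) (hf : Continuous f) :
    Tendsto (fun α : ℝ => t ^ (f α)) (nhdsWithin 2 (Set.Iio 2)) (nhds (t ^ (f 2))) :=
  ((((cont_rpow_base t ht).comp hf).tendsto 2)).mono_left nhdsWithin_le_nhds

lemma tendsto_Ffun (t : ℝ) (ht : 0 < t) :
    Tendsto (fun α => Ffun α t) (nhdsWithin 2 (Set.Iio 2)) (nhds 0) := by
  have hmem : Set.Ioo (1:ℝ) 2 ∈ nhdsWithin 2 (Set.Iio 2) :=
    Ioo_mem_nhdsLT one_lt_two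
  have h2 : Tendsto (fun α : ℝ => (α - 1) * α) (nhdsWithin 2 (Set.Iio 2)) (nhds 2) := by
    have hc : Continuous (fun α : ℝ => (α - 1) * α) := by fun_prop
    have h := (hc.tendsto (2:ℝ)).mono_left (nhdsWithin_le_nhds (s := Set.Iio 2))
    norm_num at h
    exact h
  have h1 := (tendsto_Cna_zero.mul (tendsto_base t ht (fun α => 1 - α) (by fun_prop))).div h2
    two_ne_zero
  have hmain : Tendsto (fun α => Cna α * t ^ (1 - α) / ((α - 1) * α))
      (nhdsWithin 2 (Set.Iio 2)) (nhds 0) := by simpa [Pi.div_def] using h1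
  apply hmain.congr'
  filter_upwards [hmem] with α hα
  rw [Ffun, if_neg (by intro hc; rw [hc] at hα; exact absurd hα.1 (lt_irrefl 1))]

lemma tendsto_Fd1 : Tendsto (fun α => Fd α 1) (nhdsWithin 2 (Set.Iio 2)) (nhds 0) := by
  have heq : (fun α => Fd α 1) = fun α => -Cna α / α := by
    funext α; rw [Fd, Real.one_rpow, mul_one]
  rw [heq]
  have hid : Tendsto (fun α : ℝ => α) (nhdsWithin 2 (Set.Iio 2)) (nhds 2) :=
    (continuous_id.tendsto (2:ℝ)).mono_left nhdsWithin_le_nhds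
  have := (tendsto_Cna_zero.neg.div hid two_ne_zero)
  simpa [Pi.div_def] using this

lemma part1 (h : ℝ) (hh : 0 < h) (j : ℤ) (hj : j.natAbs = 1) :
    Tendsto (fun α : ℝ => wT α h j) (nhdsWithin 2 (Set.Iio 2)) (nhds (h ^ (-(2:ℝ)))) := by
  have hj0 : j ≠ 0 := by intro hc; rw [hc] at hj; simp at hj
  have hw : (fun α : ℝ => wT α h j)
      = fun α => h ^ (-α) * (Cna α / (2 - α) - Fd α 1 + Ffun α 2 - Ffun α 1) := by
    funext α; rw [wT, if_neg hj0, if_pos hj]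
  rw [hw]
  have hbase : Tendsto (fun α : ℝ => h ^ (-α)) (nhdsWithin 2 (Set.Iio 2))
      (nhds (h ^ (-(2:ℝ)))) := tendsto_base h hh (fun α => -α) (by fun_prop)
  have hin := ((tendsto_ratio.sub tendsto_Fd1).add (tendsto_Ffun 2 two_pos)).sub
    (tendsto_Ffun 1 one_pos)
  have := hbase.mul hin
  simpa using this

lemma part2 (h : ℝ) (hh : 0 < h) (j : ℤ) (hj : 2 ≤ j.natAbs) :
    Tendsto (fun α : ℝ => wT α h j) (nhdsWithin 2 (Set.Iio 2)) (nhds 0) := by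
  have hj0 : j ≠ 0 := by
    intro hc; rw [hc] at hj; simp at hj
  have hj1 : j.natAbs ≠ 1 := by omega
  have hw : (fun α : ℝ => wT α h j) = fun α => h ^ (-α) *
      (Ffun α ((j.natAbs : ℝ) + 1) - 2 * Ffun α (j.natAbs : ℝ) + Ffun α ((j.natAbs : ℝ) - 1)) := by
    funext α; rw [wT, if_neg hj0, if_neg hj1]
  rw [hw]
  have hn : (2:ℝ) ≤ (j.natAbs : ℝ) := by exact_mod_cast hj
  have h1 := tendsto_Ffun ((j.natAbs : ℝ) + 1) (by linarith)
  have h2 := tendsto_Ffun ((j.natAbs : ℝ)) (by linarith)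
  have h3 := tendsto_Ffun ((j.natAbs : ℝ) - 1) (by linarith)
  have hbase : Tendsto (fun α : ℝ => h ^ (-α)) (nhdsWithin 2 (Set.Iio 2))
      (nhds (h ^ (-(2:ℝ)))) := tendsto_base h hh (fun α => -α) (by fun_prop)
  have := hbase.mul ((h1.sub (h2.const_mul 2)).add h3)
  simpa using this

lemma key_diff {a q : ℝ} (ha : 1 ≤ a) (hq1 : 1/2 ≤ q) (hq2 : q ≤ 1) :
    a ^ (-q) - (a + 2) ^ (-q) ≤ 2 * a ^ (-(3/2) : ℝ) := by
  have ha0 : 0 < a := by linarith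
  have hb0 : 0 < a + 2 := by linarith
  have hx0 : 0 < a / (a + 2) := by positivity
  have hx1 : a / (a + 2) ≤ 1 := by rw [div_le_one hb0]; linarith
  have step1 : a / (a + 2) ≤ (a / (a + 2)) ^ q := by
    have := Real.rpow_le_rpow_of_exponent_ge hx0 hx1 hq2
    rwa [Real.rpow_one] at this
  have haq : (0:ℝ) < a ^ q := Real.rpow_pos_of_pos ha0 q
  have hbq : (0:ℝ) < (a + 2) ^ q := Real.rpow_pos_of_pos hb0 q
  have step2 : a ^ (-q) * (a / (a + 2)) ^ q = (a + 2) ^ (-q) := by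
    rw [Real.div_rpow ha0.le hb0.le, Real.rpow_neg ha0.le, Real.rpow_neg hb0.le]
    field_simp
  have hanq : (0:ℝ) < a ^ (-q) := Real.rpow_pos_of_pos ha0 _
  have main : a ^ (-q) - (a + 2) ^ (-q) ≤ a ^ (-q) * (1 - a / (a + 2)) := by
    rw [← step2]
    nlinarith [mul_le_mul_of_nonneg_left step1 hanq.le]
  have h1ab : 1 - a / (a + 2) = 2 / (a + 2) := by field_simp; ring
  have h2b : 2 / (a + 2) ≤ 2 / a := by gcongr; linarith
  have hle : a ^ (-q) ≤ a ^ (-(1/2) : ℝ) :=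
    Real.rpow_le_rpow_of_exponent_le ha (by linarith)
  have hhalf : (0:ℝ) < a ^ (-(1/2) : ℝ) := Real.rpow_pos_of_pos ha0 _
  have hfin : a ^ (-(1/2) : ℝ) * (2 / a) = 2 * a ^ (-(3/2) : ℝ) := by
    have e : (2:ℝ)/a = 2 * a ^ (-(1:ℝ)) := by rw [Real.rpow_neg_one]; ring
    rw [e, show a ^ (-(3/2):ℝ) = a ^ (-(1/2):ℝ) * a ^ (-(1:ℝ)) from by
      rw [← Real.rpow_add ha0]; norm_num]
    ring
  have h2a : 0 ≤ 2 / a := by positivity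
  calc a ^ (-q) - (a + 2) ^ (-q) ≤ a ^ (-q) * (2 / (a + 2)) := by rw [← h1ab]; exact main
    _ ≤ a ^ (-q) * (2 / a) := by gcongr
    _ ≤ a ^ (-(1/2) : ℝ) * (2 / a) := by gcongr
    _ = 2 * a ^ (-(3/2) : ℝ) := hfin

lemma bracket_bound {α : ℝ} (hα1 : 3/2 < α) (hα2 : α < 2) (hC : |Cna α| ≤ 1)
    {m : ℝ} (hm : 2 ≤ m) :
    |Ffun α (m + 1) - 2 * Ffun α m + Ffun α (m - 1)| ≤ 4 * (m - 1) ^ (-(3/2) : ℝ) := by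
  have hne1 : α ≠ 1 := by intro hc; rw [hc] at hα1; norm_num at hα1
  have hm0 : (0:ℝ) < m := by linarith
  have ha : (1:ℝ) ≤ m - 1 := by linarith
  have ha0 : (0:ℝ) < m - 1 := by linarith
  have hF : ∀ t, Ffun α t = Cna α * t ^ (1 - α) / ((α - 1) * α) := fun t => by
    rw [Ffun, if_neg hne1]
  have hprod : (3:ℝ)/4 ≤ (α - 1) * α := by nlinarith
  have hprod0 : (0:ℝ) < (α - 1) * α := by nlinarith
  have hDexpr : Ffun α (m+1) - 2 * Ffun α m + Ffun α (m-1)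
      = Cna α / ((α - 1) * α) * ((m+1) ^ (1-α) - 2 * m ^ (1-α) + (m-1) ^ (1-α)) := by
    rw [hF, hF, hF]; ring
  have hexp : (1 - α) ≤ 0 := by linarith
  have mono1 : (m+1) ^ (1-α) ≤ m ^ (1-α) :=
    Real.rpow_le_rpow_of_nonpos hm0 (by linarith) hexp
  have mono2 : m ^ (1-α) ≤ (m-1) ^ (1-α) :=
    Real.rpow_le_rpow_of_nonpos ha0 (by linarith) hexp
  have habs : |(m+1) ^ (1-α) - 2 * m ^ (1-α) + (m-1) ^ (1-α)|
      ≤ (m-1) ^ (1-α) - (m+1) ^ (1-α) := by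
    rw [abs_le]; constructor <;> linarith
  have hkey := key_diff (a := m - 1) (q := α - 1) ha (by linarith) (by linarith)
  rw [show m - 1 + 2 = m + 1 by ring, show -(α-1) = 1-α by ring] at hkey
  have hD2 : |(m+1) ^ (1-α) - 2 * m ^ (1-α) + (m-1) ^ (1-α)|
      ≤ 2 * (m-1) ^ (-(3/2) : ℝ) := le_trans habs hkey
  rw [hDexpr, abs_mul, abs_div, abs_of_pos hprod0]
  have h2 : |Cna α| / ((α-1)*α) ≤ 2 := by
    calc |Cna α| / ((α-1)*α) ≤ 1 / (3/4) := div_le_div₀ (by norm_num) hC (by norm_num) hprod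
      _ ≤ 2 := by norm_num
  have hDnn : (0:ℝ) ≤ |(m+1) ^ (1-α) - 2 * m ^ (1-α) + (m-1) ^ (1-α)| := abs_nonneg _
  have := mul_le_mul h2 hD2 hDnn (by norm_num : (0:ℝ) ≤ 2)
  linarith

lemma h_rpow_bound {h α : ℝ} (hh : 0 < h) (hα1 : 3/2 < α) (hα2 : α < 2) :
    h ^ (-α) ≤ h ^ (-(3/2) : ℝ) + h ^ (-(2:ℝ)) := by
  rcases le_total 1 h with h1 | h1
  · have hx := Real.rpow_le_rpow_of_exponent_le h1 (by linarith : -α ≤ -(3/2 : ℝ))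
    have := (Real.rpow_pos_of_pos hh (-(2:ℝ))).le
    linarith
  · have hx := Real.rpow_le_rpow_of_exponent_ge hh h1 (by linarith : -(2:ℝ) ≤ -α)
    have := (Real.rpow_pos_of_pos hh (-(3/2) : ℝ)).le
    linarith

lemma shift_bound {n : ℝ} (hn : 2 ≤ n) : (n-1) ^ (-(3/2) : ℝ) ≤ 3 * n ^ (-(3/2) : ℝ) := by
  have h0 : (0:ℝ) < n - 1 := by linarith
  have hn0 : (0:ℝ) < n := by linarith
  have hp1 : (0:ℝ) < (n-1) ^ ((3:ℝ)/2) := Real.rpow_pos_of_pos h0 _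
  have hp2 : (0:ℝ) < n ^ ((3:ℝ)/2) := Real.rpow_pos_of_pos hn0 _
  have h4 : (2:ℝ) ^ ((3:ℝ)/2) ≤ 3 := by
    have hsq : ((2:ℝ) ^ ((3:ℝ)/2)) ^ (2:ℕ) = 8 := by
      rw [← Real.rpow_natCast ((2:ℝ) ^ ((3:ℝ)/2)) 2, ← Real.rpow_mul (by norm_num : (0:ℝ) ≤ 2)]
      norm_num
    nlinarith [Real.rpow_pos_of_pos (by norm_num : (0:ℝ) < 2) ((3:ℝ)/2)]
  have key : n ^ ((3:ℝ)/2) ≤ 3 * (n-1) ^ ((3:ℝ)/2) := by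
    have h1 : n ≤ 2 * (n - 1) := by linarith
    have h2 : n ^ ((3:ℝ)/2) ≤ (2*(n-1)) ^ ((3:ℝ)/2) :=
      Real.rpow_le_rpow hn0.le h1 (by norm_num)
    have h3 : (2*(n-1)) ^ ((3:ℝ)/2) = 2 ^ ((3:ℝ)/2) * (n-1) ^ ((3:ℝ)/2) :=
      Real.mul_rpow (by norm_num) h0.le
    nlinarith
  have e1 : (n-1) ^ (-(3/2) : ℝ) = ((n-1) ^ ((3:ℝ)/2))⁻¹ := by
    rw [show (-(3/2) : ℝ) = -((3:ℝ)/2) by norm_num, Real.rpow_neg h0.le]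
  have e2 : n ^ (-(3/2) : ℝ) = (n ^ ((3:ℝ)/2))⁻¹ := by
    rw [show (-(3/2) : ℝ) = -((3:ℝ)/2) by norm_num, Real.rpow_neg hn0.le]
  rw [e1, e2]
  rw [inv_le_iff_one_le_mul₀ hp1]
  have : 3 * (n ^ ((3:ℝ)/2))⁻¹ * (n-1) ^ ((3:ℝ)/2) = (3 * (n-1) ^ ((3:ℝ)/2)) / n ^ ((3:ℝ)/2) := by
    field_simp
  rw [this, le_div_iff₀ hp2, one_mul]
  exact key

lemma wT_bound_big {h α : ℝ} (hh : 0 < h) (hα1 : 3/2 < α) (hα2 : α < 2)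
    (hC : |Cna α| ≤ 1) (j : ℤ) (hj : 2 ≤ j.natAbs) :
    |wT α h j| ≤ (h ^ (-(3/2) : ℝ) + h ^ (-(2:ℝ))) * (4 * ((j.natAbs : ℝ) - 1) ^ (-(3/2) : ℝ)) := by
  have hj0 : j ≠ 0 := by intro hc; rw [hc] at hj; simp at hj
  have hj1 : j.natAbs ≠ 1 := by omega
  have hm : (2:ℝ) ≤ (j.natAbs : ℝ) := by exact_mod_cast hj
  rw [wT, if_neg hj0, if_neg hj1, abs_mul,
    abs_of_pos (Real.rpow_pos_of_pos hh (-α))]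
  have hb := bracket_bound hα1 hα2 hC hm
  have hH := h_rpow_bound hh hα1 hα2
  have h1 : (0:ℝ) ≤ 4 * ((j.natAbs : ℝ) - 1) ^ (-(3/2) : ℝ) := by
    have := (Real.rpow_pos_of_pos (by linarith : (0:ℝ) < (j.natAbs : ℝ) - 1) (-(3/2) : ℝ)).le
    linarith
  exact mul_le_mul hH hb (abs_nonneg _) (by positivity)

lemma summable_G : Summable (fun j : ℤ => 1 / |(j:ℝ)| ^ ((3:ℝ)/2)) := by
  have := (Real.summable_one_div_int_add_rpow 0 (3/2)).mpr (by norm_num)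
  simpa using this

lemma habsj (j : ℤ) : |(j:ℝ)| = (j.natAbs : ℝ) := by
  rw [← Int.cast_abs, Int.abs_eq_natAbs, Int.cast_natCast]

lemma part3 (h : ℝ) (hh : 0 < h) (u : ℤ → ℝ) (hBex : ∃ B : ℝ, ∀ i : ℤ, |u i| ≤ B) (i : ℤ) :
    Tendsto (fun α : ℝ => ∑' j : {j : ℤ // j ≠ 0}, (u i - u (i - (j : ℤ))) * wT α h (j : ℤ))
      (nhdsWithin 2 (Set.Iio 2)) (nhds (-(u (i + 1) - 2 * u i + u (i - 1)) / h ^ 2)) := by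
  obtain ⟨B, hB⟩ := hBex
  have hB0 : 0 ≤ B := le_trans (abs_nonneg _) (hB 0)
  have hr2 : (0:ℝ) < h ^ (-(2:ℝ)) := Real.rpow_pos_of_pos hh _
  have hr32 : (0:ℝ) < h ^ (-(3/2):ℝ) := Real.rpow_pos_of_pos hh _
  set K : ℝ := 2*B*(h^(-(2:ℝ)) + 1) + 24*B*(h^(-(3/2):ℝ) + h^(-(2:ℝ))) with hK
  have hK1 : (0:ℝ) ≤ 2*B*(h^(-(2:ℝ)) + 1) := mul_nonneg (by linarith) (by linarith)
  have hK2 : (0:ℝ) ≤ 24*B*(h^(-(3/2):ℝ) + h^(-(2:ℝ))) := mul_nonneg (by linarith) (by linarith)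
  have hsum : Summable (fun j : {j : ℤ // j ≠ 0} => K * (1 / |((j:ℤ):ℝ)| ^ ((3:ℝ)/2))) :=
    ((summable_G.mul_left K).comp_injective Subtype.coe_injective)
  have hpt : ∀ j : {j : ℤ // j ≠ 0},
      Tendsto (fun α : ℝ => (u i - u (i - (j:ℤ))) * wT α h (j:ℤ)) (nhdsWithin 2 (Set.Iio 2))
        (nhds ((u i - u (i - (j:ℤ))) * (if (j:ℤ).natAbs = 1 then h ^ (-(2:ℝ)) else 0))) := by
    intro j
    by_cases hj : (j:ℤ).natAbs = 1
    · rw [if_pos hj]; exact (part1 h hh _ hj).const_mul _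
    · have h0 : (j:ℤ).natAbs ≠ 0 := fun hc => j.2 (Int.natAbs_eq_zero.mp hc)
      have hj2 : 2 ≤ (j:ℤ).natAbs := by omega
      rw [if_neg hj]
      simpa using (part2 h hh _ hj2).const_mul (u i - u (i - (j:ℤ)))
  have hE2 : ∀ᶠ α in nhdsWithin (2:ℝ) (Set.Iio 2), |Cna α| < 1 := by
    have ht := tendsto_Cna_zero.abs
    rw [abs_zero] at ht
    exact ht.eventually_lt_const one_pos
  have hE3 : ∀ᶠ α in nhdsWithin (2:ℝ) (Set.Iio 2), |wT α h 1| < h ^ (-(2:ℝ)) + 1 := by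
    have ht := (part1 h hh 1 rfl).abs
    rw [abs_of_pos hr2] at ht
    exact ht.eventually_lt_const (by linarith)
  have hE1 : ∀ᶠ α in nhdsWithin (2:ℝ) (Set.Iio 2), α ∈ Set.Ioo (3/2 : ℝ) 2 :=
    Ioo_mem_nhdsLT (by norm_num)
  have hbnd : ∀ᶠ α in nhdsWithin (2:ℝ) (Set.Iio 2), ∀ j : {j : ℤ // j ≠ 0},
      ‖(u i - u (i - (j:ℤ))) * wT α h (j:ℤ)‖ ≤ K * (1 / |((j:ℤ):ℝ)| ^ ((3:ℝ)/2)) := by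
    filter_upwards [hE1, hE2, hE3] with α hα hC hW1
    intro j
    have hu : |u i - u (i - (j:ℤ))| ≤ 2 * B := by
      calc |u i - u (i - (j:ℤ))| ≤ |u i| + |u (i - (j:ℤ))| := abs_sub _ _
        _ ≤ 2 * B := by have h1 := hB i; have h2 := hB (i - (j:ℤ)); linarith
    rw [Real.norm_eq_abs, abs_mul]
    by_cases hj : (j:ℤ).natAbs = 1
    · have hwe : wT α h (j:ℤ) = wT α h 1 := by
        rw [wT, wT, if_neg j.2, if_neg (one_ne_zero), if_pos hj, if_pos Int.natAbs_one]
      have hj1 : |((j:ℤ):ℝ)| = 1 := by rw [habsj, hj]; norm_num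
      rw [hwe, hj1, Real.one_rpow, div_one, mul_one]
      calc |u i - u (i - (j:ℤ))| * |wT α h 1| ≤ (2*B) * (h^(-(2:ℝ)) + 1) :=
            mul_le_mul hu hW1.le (abs_nonneg _) (by linarith)
        _ ≤ K := by rw [hK]; linarith
    · have h0 : (j:ℤ).natAbs ≠ 0 := fun hc => j.2 (Int.natAbs_eq_zero.mp hc)
      have hj2 : 2 ≤ (j:ℤ).natAbs := by omega
      have hm : (2:ℝ) ≤ ((j:ℤ).natAbs : ℝ) := by exact_mod_cast hj2
      have hn0 : (0:ℝ) < ((j:ℤ).natAbs : ℝ) := by linarith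
      have hw := wT_bound_big hh hα.1 hα.2 hC.le (j:ℤ) hj2
      have hs := shift_bound hm
      have e2 : (1 : ℝ) / |((j:ℤ):ℝ)| ^ ((3:ℝ)/2) = ((j:ℤ).natAbs : ℝ) ^ (-(3/2) : ℝ) := by
        rw [habsj, show (-(3/2) : ℝ) = -((3:ℝ)/2) by norm_num, Real.rpow_neg hn0.le, one_div]
      rw [e2]
      have hq0 : (0:ℝ) ≤ ((j:ℤ).natAbs : ℝ) ^ (-(3/2):ℝ) := (Real.rpow_pos_of_pos hn0 _).le
      have hHb0 : (0:ℝ) < h^(-(3/2):ℝ) + h^(-(2:ℝ)) := by linarith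
      have step : |wT α h (j:ℤ)| ≤ (h^(-(3/2):ℝ) + h^(-(2:ℝ)))
          * (12 * ((j:ℤ).natAbs : ℝ) ^ (-(3/2):ℝ)) := by
        calc |wT α h (j:ℤ)|
            ≤ (h^(-(3/2):ℝ) + h^(-(2:ℝ))) * (4 * (((j:ℤ).natAbs:ℝ)-1)^(-(3/2):ℝ)) := hw
          _ ≤ (h^(-(3/2):ℝ) + h^(-(2:ℝ))) * (4 * (3 * ((j:ℤ).natAbs:ℝ)^(-(3/2):ℝ))) := by
              apply mul_le_mul_of_nonneg_left _ hHb0.le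
              exact mul_le_mul_of_nonneg_left hs (by norm_num)
          _ = (h^(-(3/2):ℝ) + h^(-(2:ℝ))) * (12 * ((j:ℤ).natAbs : ℝ) ^ (-(3/2):ℝ)) := by ring
      calc |u i - u (i - (j:ℤ))| * |wT α h (j:ℤ)|
          ≤ (2*B) * ((h^(-(3/2):ℝ) + h^(-(2:ℝ))) * (12 * ((j:ℤ).natAbs : ℝ) ^ (-(3/2):ℝ))) :=
            mul_le_mul hu step (abs_nonneg _) (by linarith)
        _ = (24*B*(h^(-(3/2):ℝ) + h^(-(2:ℝ)))) * ((j:ℤ).natAbs : ℝ) ^ (-(3/2):ℝ) := by ring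
        _ ≤ K * ((j:ℤ).natAbs : ℝ) ^ (-(3/2):ℝ) := by
            apply mul_le_mul_of_nonneg_right _ hq0
            rw [hK]; linarith
  have hmain := tendsto_tsum_of_dominated_convergence hsum hpt hbnd
  have htsum : (∑' j : {j : ℤ // j ≠ 0},
      (u i - u (i - (j:ℤ))) * (if (j:ℤ).natAbs = 1 then h ^ (-(2:ℝ)) else 0))
      = -(u (i + 1) - 2 * u i + u (i - 1)) / h ^ 2 := by
    have hne : (⟨1, one_ne_zero⟩ : {j : ℤ // j ≠ 0}) ≠ ⟨-1, by norm_num⟩ := by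
      intro hc; rw [Subtype.ext_iff] at hc; norm_num at hc
    rw [tsum_eq_sum (s := {(⟨1, one_ne_zero⟩ : {j : ℤ // j ≠ 0}), ⟨-1, by norm_num⟩})
      (f := fun j : {j : ℤ // j ≠ 0} =>
        (u i - u (i - (j:ℤ))) * (if (j:ℤ).natAbs = 1 then h ^ (-(2:ℝ)) else 0)) ?_]
    · rw [Finset.sum_insert (by simp [hne]), Finset.sum_singleton]
      norm_num
      ring
    · intro b hb
      by_cases hn : (b:ℤ).natAbs = 1
      · exfalso
        apply hb
        rcases Int.natAbs_eq_iff.mp hn with h1 | h1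
        · simp only [Finset.mem_insert, Finset.mem_singleton]
          left; exact Subtype.ext (by exact_mod_cast h1)
        · simp only [Finset.mem_insert, Finset.mem_singleton]
          right; exact Subtype.ext (by exact_mod_cast h1)
      · simp [hn]
  rw [htsum] at hmain
  exact hmain


/-- As `α → 2⁻`, the weight `w_j^T` tends to `h^{−2}` for `|j| = 1` and to `0` for `|j| ≥ 2`;
consequently the discrete operator `Σ_{j≠0}(u_i − u_{i−j}) w_j^T` tends to the standard
three-point centered difference `−(u_{i+1} − 2u_i + u_{i−1})/h²`. -/
theorem wT_limit_alpha_two (h : ℝ) (hh : 0 < h) :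
    (∀ j : ℤ, j.natAbs = 1 →
      Tendsto (fun α : ℝ => wT α h j) (nhdsWithin 2 (Set.Iio 2)) (nhds (h ^ (-(2:ℝ))))) ∧
    (∀ j : ℤ, 2 ≤ j.natAbs →
      Tendsto (fun α : ℝ => wT α h j) (nhdsWithin 2 (Set.Iio 2)) (nhds 0)) ∧
    (∀ u : ℤ → ℝ, (∃ B : ℝ, ∀ i : ℤ, |u i| ≤ B) → ∀ i : ℤ,
      Tendsto (fun α : ℝ => ∑' j : {j : ℤ // j ≠ 0}, (u i - u (i - (j : ℤ))) * wT α h (j : ℤ))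
        (nhdsWithin 2 (Set.Iio 2)) (nhds (-(u (i + 1) - 2 * u i + u (i - 1)) / h ^ 2))) := by
  exact ⟨fun j hj => part1 h hh j hj, fun j hj => part2 h hh j hj,
    fun u hu i => part3 h hh u hu i⟩
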